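/- Let γ₁,γ₂ be nonzero reals not both positive, and consider a polynomial equation rₙxⁿ + r_{n-1}x^{n-1} + ⋯ + r₀ = 0 with real coefficients rₖ in H(γ₁,γ₂). Then every non-real root of this equation is hyperboloidal. -/

import Mathlib

open Quaternion

/-- Auxiliary coefficient sequences for reducing powers modulo `x² = t•x - nn•1`. -/
noncomputable def s9f (t nn : ℝ) : ℕ → ℝ × ℝ
  | 0 => (0, 1)
  | k + 1 => (t * (s9f t nn k).1 + (s9f t nn k).2, -nn * (s9f t nn k).1)

theorem s9_pow (γ₁ γ₂ t nn : ℝ) (x : ℍ[ℝ, -γ₁, -γ₂])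
    (hsq : x ^ 2 = t • x - nn • 1) (k : ℕ) :
    x ^ k = (s9f t nn k).1 • x + (s9f t nn k).2 • (1 : ℍ[ℝ, -γ₁, -γ₂]) := by
  induction k with
  | zero => simp [s9f]
  | succ k ih =>
    rw [pow_succ, ih]
    have hx2 : x * x = t • x - nn • 1 := by rw [← sq]; exact hsq
    simp only [s9f, add_mul, smul_mul_assoc, one_mul, hx2]
    module

/-- Let `γ₁, γ₂` be nonzero reals, not both positive.  Every non-real root of a
polynomial equation `rₙxⁿ + ⋯ + r₀ = 0` with real coefficients in `H(γ₁,γ₂)` is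
hyperboloidal: every `x₁` with the same real part and the same value of the quadratic form
`γ₁b₁² + γ₂b₂² + γ₁γ₂b₃²` on the imaginary part is also a root. -/
theorem statement9 (γ₁ γ₂ : ℝ) (h₁ : γ₁ ≠ 0) (h₂ : γ₂ ≠ 0) (hng : ¬(0 < γ₁ ∧ 0 < γ₂))
    (n : ℕ) (r : Fin (n + 1) → ℝ) (x₀ : ℍ[ℝ, -γ₁, -γ₂])
    (hroot : ∑ k : Fin (n + 1), r k • x₀ ^ (k : ℕ) = 0)
    (hnonreal : ¬(x₀.imI = 0 ∧ x₀.imJ = 0 ∧ x₀.imK = 0)) :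
    ∀ x₁ : ℍ[ℝ, -γ₁, -γ₂], x₁.re = x₀.re →
      γ₁ * x₁.imI ^ 2 + γ₂ * x₁.imJ ^ 2 + γ₁ * γ₂ * x₁.imK ^ 2 =
        γ₁ * x₀.imI ^ 2 + γ₂ * x₀.imJ ^ 2 + γ₁ * γ₂ * x₀.imK ^ 2 →
      ∑ k : Fin (n + 1), r k • x₁ ^ (k : ℕ) = 0 := by
  intro x₁ hre hq
  set t : ℝ := 2 * x₀.re with ht
  set nn : ℝ := x₀.re ^ 2 + (γ₁ * x₀.imI ^ 2 + γ₂ * x₀.imJ ^ 2 + γ₁ * γ₂ * x₀.imK ^ 2)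
    with hnn
  have hsq : ∀ x : ℍ[ℝ, -γ₁, -γ₂], x.re = x₀.re →
      γ₁ * x.imI ^ 2 + γ₂ * x.imJ ^ 2 + γ₁ * γ₂ * x.imK ^ 2 =
        γ₁ * x₀.imI ^ 2 + γ₂ * x₀.imJ ^ 2 + γ₁ * γ₂ * x₀.imK ^ 2 →
      x ^ 2 = t • x - nn • 1 := by
    intro x hre' hq'
    rw [sq]
    ext <;>
      simp only [QuaternionAlgebra.re_mul, QuaternionAlgebra.imI_mul,
        QuaternionAlgebra.imJ_mul, QuaternionAlgebra.imK_mul, QuaternionAlgebra.re_sub,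
        QuaternionAlgebra.imI_sub, QuaternionAlgebra.imJ_sub, QuaternionAlgebra.imK_sub,
        QuaternionAlgebra.re_smul, QuaternionAlgebra.imI_smul, QuaternionAlgebra.imJ_smul,
        QuaternionAlgebra.imK_smul, QuaternionAlgebra.re_one, QuaternionAlgebra.imI_one,
        QuaternionAlgebra.imJ_one, QuaternionAlgebra.imK_one, smul_eq_mul, ht, hnn, hre'] <;>
      nlinarith [hq', sq_nonneg x.imI]
  have h0 := hsq x₀ rfl rfl
  have h1 := hsq x₁ hre hq
  have expand : ∀ (x : ℍ[ℝ, -γ₁, -γ₂]), x ^ 2 = t • x - nn • 1 →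
      ∑ k : Fin (n + 1), r k • x ^ (k : ℕ) =
        (∑ k : Fin (n + 1), r k * (s9f t nn (k : ℕ)).1) • x +
          (∑ k : Fin (n + 1), r k * (s9f t nn (k : ℕ)).2) • (1 : ℍ[ℝ, -γ₁, -γ₂]) := by
    intro x hx
    rw [Finset.sum_smul, Finset.sum_smul, ← Finset.sum_add_distrib]
    refine Finset.sum_congr rfl fun k _ => ?_
    rw [s9_pow γ₁ γ₂ t nn x hx (k : ℕ), smul_add, smul_smul, smul_smul]
  set A : ℝ := ∑ k : Fin (n + 1), r k * (s9f t nn (k : ℕ)).1 with hA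
  set B : ℝ := ∑ k : Fin (n + 1), r k * (s9f t nn (k : ℕ)).2 with hB
  have h0' : A • x₀ + B • (1 : ℍ[ℝ, -γ₁, -γ₂]) = 0 := by
    rw [← expand x₀ h0]; exact hroot
  have hAI : A * x₀.imI = 0 := by
    have := congrArg QuaternionAlgebra.imI h0'
    simpa using this
  have hAJ : A * x₀.imJ = 0 := by
    have := congrArg QuaternionAlgebra.imJ h0'
    simpa using this
  have hAK : A * x₀.imK = 0 := by
    have := congrArg QuaternionAlgebra.imK h0'
    simpa using this
  have hA0 : A = 0 := by
    by_contra hA'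
    exact hnonreal ⟨(mul_eq_zero.mp hAI).resolve_left hA',
      (mul_eq_zero.mp hAJ).resolve_left hA', (mul_eq_zero.mp hAK).resolve_left hA'⟩
  have hB0 : B = 0 := by
    have := congrArg QuaternionAlgebra.re h0'
    simp [hA0] at this
    simpa using this
  rw [expand x₁ h1, hA0, hB0]
  simp
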